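/- Let μ be a probability measure on ℝ that is absolutely continuous with respect to Lebesgue measure with density f, and let x₀ ∈ ℝ be a point at which f is continuous. Then lim_{y→0⁺} (1/π) · Im ∫ 1/( x − (x₀ + iy) ) dμ(x) = f(x₀) (the Stieltjes inversion formula). -/

import Mathlib

open MeasureTheory Filter Topology Complex

lemma poisson_cont (x₀ y : ℝ) (hy : 0 < y) :
    Continuous (fun x : ℝ => Real.pi⁻¹ * (y / ((x - x₀) ^ 2 + y ^ 2))) := by
  have h : ∀ x : ℝ, (x - x₀) ^ 2 + y ^ 2 ≠ 0 := fun x => by positivity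
  fun_prop (disch := exact fun x => h x)

lemma poisson_setIntegral (x₀ y δ : ℝ) (hy : 0 < y) (hδ : 0 < δ) :
    ∫ x in Set.Ioo (x₀ - δ) (x₀ + δ), Real.pi⁻¹ * (y / ((x - x₀) ^ 2 + y ^ 2)) =
      Real.pi⁻¹ * (2 * Real.arctan (δ / y)) := by
  have hab : x₀ - δ ≤ x₀ + δ := by linarith
  rw [← MeasureTheory.integral_Ioc_eq_integral_Ioo, ← intervalIntegral.integral_of_le hab]
  have hderiv : ∀ x ∈ Set.uIcc (x₀ - δ) (x₀ + δ),
      HasDerivAt (fun x : ℝ => Real.pi⁻¹ * Real.arctan ((x - x₀) / y))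
        (Real.pi⁻¹ * (y / ((x - x₀) ^ 2 + y ^ 2))) x := by
    intro x _
    have h1 : HasDerivAt (fun x : ℝ => (x - x₀) / y) (1 / y) x := by
      simpa using ((hasDerivAt_id x).sub_const x₀).div_const y
    have h2 := (Real.hasDerivAt_arctan ((x - x₀) / y)).comp x h1
    have h3 := h2.const_mul Real.pi⁻¹
    convert h3 using 1
    have hy' : y ≠ 0 := ne_of_gt hy
    have hden : (x - x₀) ^ 2 + y ^ 2 ≠ 0 := by positivity
    · rfl
    · rfl
    · rfl
    field_simp
    ring
  rw [intervalIntegral.integral_eq_sub_of_hasDerivAt hderiv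
    ((poisson_cont x₀ y hy).intervalIntegrable _ _)]
  have h1 : (x₀ + δ - x₀) / y = δ / y := by ring_nf
  have h2 : (x₀ - δ - x₀) / y = -(δ / y) := by ring_nf
  rw [h1, h2, Real.arctan_neg]
  ring

/-- the normalized Poisson integral over the window tends to 1 -/
lemma poisson_setIntegral_tendsto (x₀ δ : ℝ) (hδ : 0 < δ) :
    Tendsto (fun y : ℝ => ∫ x in Set.Ioo (x₀ - δ) (x₀ + δ),
        Real.pi⁻¹ * (y / ((x - x₀) ^ 2 + y ^ 2))) (𝓝[>] 0) (𝓝 1) := by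
  have harg : Tendsto (fun y : ℝ => δ / y) (𝓝[>] 0) atTop := by
    simpa [div_eq_mul_inv] using tendsto_inv_nhdsGT_zero.const_mul_atTop hδ
  have harctan : Tendsto (fun y : ℝ => Real.arctan (δ / y)) (𝓝[>] 0) (𝓝 (Real.pi / 2)) :=
    (Real.tendsto_arctan_atTop.mono_right nhdsWithin_le_nhds).comp harg
  have h : Tendsto (fun y : ℝ => Real.pi⁻¹ * (2 * Real.arctan (δ / y))) (𝓝[>] 0)
      (𝓝 (Real.pi⁻¹ * (2 * (Real.pi / 2)))) := by
    exact (harctan.const_mul 2).const_mul Real.pi⁻¹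
  have hπ : Real.pi ≠ 0 := Real.pi_ne_zero
  have : Real.pi⁻¹ * (2 * (Real.pi / 2)) = 1 := by field_simp
  rw [this] at h
  apply h.congr'
  filter_upwards [self_mem_nhdsWithin] with y hy
  exact (poisson_setIntegral x₀ y δ hy hδ).symm

lemma poisson_setIntegral_le_one (x₀ y δ : ℝ) (hy : 0 < y) (hδ : 0 < δ) :
    ∫ x in Set.Ioo (x₀ - δ) (x₀ + δ), Real.pi⁻¹ * (y / ((x - x₀) ^ 2 + y ^ 2)) ≤ 1 := by
  rw [poisson_setIntegral x₀ y δ hy hδ]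
  have h1 : Real.arctan (δ / y) ≤ Real.pi / 2 := (Real.arctan_lt_pi_div_two _).le
  have hπ : (0:ℝ) < Real.pi := Real.pi_pos
  calc Real.pi⁻¹ * (2 * Real.arctan (δ / y)) ≤ Real.pi⁻¹ * (2 * (Real.pi / 2)) := by
        gcongr
    _ = 1 := by field_simp

/-- **Stieltjes inversion formula.** If `μ` is a probability measure on `ℝ` absolutely
continuous with respect to Lebesgue measure with density `f`, and `f` is continuous at `x₀`,
then `lim_{y→0⁺} (1/π)·Im ∫ 1/(x − (x₀ + iy)) dμ(x) = f(x₀)`. -/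
theorem stieltjes_inversion
    (f : ℝ → ℝ) (hf : ∀ x, 0 ≤ f x)
    (μ : Measure ℝ) [IsProbabilityMeasure μ]
    (hμ : μ = volume.withDensity fun x => ENNReal.ofReal (f x))
    (x₀ : ℝ) (hcont : ContinuousAt f x₀) :
    Tendsto
      (fun y : ℝ =>
        (1 / Real.pi) * (∫ x, ((x : ℂ) - ((x₀ : ℂ) + (y : ℂ) * Complex.I))⁻¹ ∂μ).im)
      (𝓝[>] 0) (𝓝 (f x₀)) := by
  have hπ : (0:ℝ) < Real.pi := Real.pi_pos
  set P : ℝ → ℝ → ℝ := fun y x => Real.pi⁻¹ * (y / ((x - x₀) ^ 2 + y ^ 2)) with hPdef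
  have hPnonneg : ∀ y : ℝ, 0 < y → ∀ x, 0 ≤ P y x := by
    intro y hy x
    have h : (0:ℝ) ≤ y / ((x - x₀) ^ 2 + y ^ 2) := by positivity
    positivity
  have hPle : ∀ y : ℝ, 0 < y → ∀ x, P y x ≤ Real.pi⁻¹ * y⁻¹ := by
    intro y hy x
    have h1 : y / ((x - x₀) ^ 2 + y ^ 2) ≤ y / y ^ 2 :=
      div_le_div_of_nonneg_left hy.le (by positivity) (by nlinarith [sq_nonneg (x - x₀)])
    have h2 : y / y ^ 2 = y⁻¹ := by
      field_simp [hy.ne']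
    calc P y x ≤ Real.pi⁻¹ * (y / y ^ 2) := by
          simp only [hPdef]; gcongr
      _ = Real.pi⁻¹ * y⁻¹ := by rw [h2]
  have hPint : ∀ y : ℝ, 0 < y → Integrable (P y) μ := by
    intro y hy
    refine ⟨(poisson_cont x₀ y hy).aestronglyMeasurable, ?_⟩
    apply HasFiniteIntegral.of_bounded (C := Real.pi⁻¹ * y⁻¹)
    filter_upwards with x
    rw [Real.norm_of_nonneg (hPnonneg y hy x)]
    exact hPle y hy x
  -- main statement for the real Poisson averages
  have key : Tendsto (fun y : ℝ => ∫ x, P y x ∂μ) (𝓝[>] 0) (𝓝 (f x₀)) := by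
    rw [tendsto_order]
    constructor
    · -- lower bound
      intro a ha
      set ε := f x₀ - a with hεdef
      have hε : 0 < ε := by simp only [hεdef]; linarith
      obtain ⟨δ, hδ, hδf⟩ := Metric.continuousAt_iff.1 hcont (ε/2) (by positivity)
      set B := Set.Ioo (x₀ - δ) (x₀ + δ) with hBdef
      have hBmeas : MeasurableSet B := measurableSet_Ioo
      set c := max 0 (f x₀ - ε / 2) with hcdef
      have hac : a < c := lt_max_of_lt_right (by simp only [hεdef]; linarith)
      have hc0 : 0 ≤ c := le_max_left _ _
      have hcf : ∀ x ∈ B, c ≤ f x := by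
        intro x hx
        have hxd : dist x x₀ < δ := by
          rw [Real.dist_eq, abs_sub_lt_iff]
          exact ⟨by linarith [hx.2], by linarith [hx.1]⟩
        have h1 := hδf hxd
        rw [Real.dist_eq, abs_sub_lt_iff] at h1
        exact max_le (hf x) (by linarith [h1.2])
      have hmeasle : (ENNReal.ofReal c) • volume.restrict B ≤ μ.restrict B := by
        rw [Measure.le_iff]
        intro s hs
        rw [Measure.smul_apply, Measure.restrict_apply hs, Measure.restrict_apply hs, hμ,
          withDensity_apply _ (hs.inter hBmeas), smul_eq_mul, ← setLIntegral_const]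
        exact setLIntegral_mono' (hs.inter hBmeas)
          (fun x hx => ENNReal.ofReal_le_ofReal (hcf x hx.2))
      have hcI : Tendsto (fun y : ℝ => c * ∫ x in B, P y x) (𝓝[>] 0) (𝓝 c) := by
        simpa using (poisson_setIntegral_tendsto x₀ δ hδ).const_mul c
      filter_upwards [self_mem_nhdsWithin, (tendsto_order.1 hcI).1 a hac] with y hy hay
      replace hy : (0:ℝ) < y := hy
      refine lt_of_lt_of_le hay ?_
      have h1 : c * ∫ x in B, P y x =
          ∫ x, P y x ∂((ENNReal.ofReal c) • volume.restrict B) := by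
        rw [integral_smul_measure, ENNReal.toReal_ofReal hc0, smul_eq_mul]
      have h2 : ∫ x, P y x ∂((ENNReal.ofReal c) • volume.restrict B) ≤
          ∫ x, P y x ∂(μ.restrict B) :=
        integral_mono_measure hmeasle (Eventually.of_forall (hPnonneg y hy))
          ((hPint y hy).restrict)
      have h3 : ∫ x in B, P y x ∂μ ≤ ∫ x, P y x ∂μ :=
        setIntegral_le_integral (hPint y hy) (Eventually.of_forall (hPnonneg y hy))
      calc c * ∫ x in B, P y x = _ := h1
        _ ≤ ∫ x in B, P y x ∂μ := h2
        _ ≤ ∫ x, P y x ∂μ := h3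
    · -- upper bound
      intro b hb
      set ε := b - f x₀ with hεdef
      have hε : 0 < ε := by simp only [hεdef]; linarith
      obtain ⟨δ, hδ, hδf⟩ := Metric.continuousAt_iff.1 hcont (ε/2) (by positivity)
      set B := Set.Ioo (x₀ - δ) (x₀ + δ) with hBdef
      have hBmeas : MeasurableSet B := measurableSet_Ioo
      set c := f x₀ + ε / 2 with hcdef
      have hc0 : 0 ≤ c := by have := hf x₀; simp only [hcdef]; linarith
      have hcb : c < b := by simp only [hcdef, hεdef]; linarith
      have hcf : ∀ x ∈ B, f x ≤ c := by
        intro x hx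
        have hxd : dist x x₀ < δ := by
          rw [Real.dist_eq, abs_sub_lt_iff]
          exact ⟨by linarith [hx.2], by linarith [hx.1]⟩
        have h1 := hδf hxd
        rw [Real.dist_eq, abs_sub_lt_iff] at h1
        simp only [hcdef]; linarith [h1.1]
      have hmeasle : μ.restrict B ≤ (ENNReal.ofReal c) • volume.restrict B := by
        rw [Measure.le_iff]
        intro s hs
        rw [Measure.smul_apply, Measure.restrict_apply hs, Measure.restrict_apply hs, hμ,
          withDensity_apply _ (hs.inter hBmeas), smul_eq_mul, ← setLIntegral_const]
        exact setLIntegral_mono' (hs.inter hBmeas)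
          (fun x hx => ENNReal.ofReal_le_ofReal (hcf x hx.2))
      have hr : Tendsto (fun y : ℝ => c + Real.pi⁻¹ * (y / δ ^ 2)) (𝓝[>] 0) (𝓝 c) := by
        have hcont2 : Continuous fun y : ℝ => c + Real.pi⁻¹ * (y / δ ^ 2) := by fun_prop
        have h0 : Tendsto (fun y : ℝ => c + Real.pi⁻¹ * (y / δ ^ 2)) (𝓝[>] 0)
            (𝓝 (c + Real.pi⁻¹ * (0 / δ ^ 2))) :=
          (hcont2.tendsto 0).mono_left nhdsWithin_le_nhds
        simpa using h0
      filter_upwards [self_mem_nhdsWithin, (tendsto_order.1 hr).2 b hcb] with y hy hby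
      replace hy : (0:ℝ) < y := hy
      refine lt_of_le_of_lt ?_ hby
      have hsplit : ∫ x, P y x ∂μ = (∫ x in B, P y x ∂μ) + ∫ x in Bᶜ, P y x ∂μ :=
        (integral_add_compl hBmeas (hPint y hy)).symm
      have hPintVol : IntegrableOn (P y) B volume :=
        ((poisson_cont x₀ y hy).integrableOn_Icc).mono_set Set.Ioo_subset_Icc_self
      have hnear : ∫ x in B, P y x ∂μ ≤ c := by
        have h2 : ∫ x, P y x ∂(μ.restrict B) ≤
            ∫ x, P y x ∂((ENNReal.ofReal c) • volume.restrict B) :=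
          integral_mono_measure hmeasle (Eventually.of_forall (hPnonneg y hy))
            (hPintVol.smul_measure ENNReal.ofReal_ne_top)
        have h1 : ∫ x, P y x ∂((ENNReal.ofReal c) • volume.restrict B) =
            c * ∫ x in B, P y x := by
          rw [integral_smul_measure, ENNReal.toReal_ofReal hc0, smul_eq_mul]
        have h3 : c * ∫ x in B, P y x ≤ c * 1 :=
          mul_le_mul_of_nonneg_left (poisson_setIntegral_le_one x₀ y δ hy hδ) hc0
        calc ∫ x in B, P y x ∂μ ≤ _ := h2
          _ = c * ∫ x in B, P y x := h1
          _ ≤ c * 1 := h3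
          _ = c := mul_one c
      have hfarbd : ∀ x ∈ Bᶜ, P y x ≤ Real.pi⁻¹ * (y / δ ^ 2) := by
        intro x hx
        have hxd : δ ≤ |x - x₀| := by
          by_contra h
          push_neg at h
          rw [abs_sub_lt_iff] at h
          exact hx ⟨by linarith [h.2], by linarith [h.1]⟩
        have hδ2 : δ ^ 2 ≤ (x - x₀) ^ 2 + y ^ 2 := by
          nlinarith [_root_.sq_abs (x - x₀), sq_nonneg y]
        have h7 : y / ((x - x₀) ^ 2 + y ^ 2) ≤ y / δ ^ 2 :=
          div_le_div_of_nonneg_left hy.le (by positivity) hδ2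
        simp only [hPdef]
        exact mul_le_mul_of_nonneg_left h7 (by positivity)
      have hfar : ∫ x in Bᶜ, P y x ∂μ ≤ Real.pi⁻¹ * (y / δ ^ 2) := by
        have hCnn : (0:ℝ) ≤ Real.pi⁻¹ * (y / δ ^ 2) := by positivity
        calc ∫ x in Bᶜ, P y x ∂μ ≤ ∫ x in Bᶜ, Real.pi⁻¹ * (y / δ ^ 2) ∂μ := by
              refine integral_mono_ae ((hPint y hy).restrict) (integrable_const _) ?_
              exact (ae_restrict_iff' hBmeas.compl).2 (Eventually.of_forall hfarbd)
          _ = (μ Bᶜ).toReal * (Real.pi⁻¹ * (y / δ ^ 2)) := by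
              rw [integral_const, Measure.real, Measure.restrict_apply_univ, smul_eq_mul]
          _ ≤ 1 * (Real.pi⁻¹ * (y / δ ^ 2)) := by
              have h5 : (μ Bᶜ).toReal ≤ 1 := by
                simpa using ENNReal.toReal_mono ENNReal.one_ne_top
                  (prob_le_one (μ := μ) (s := Bᶜ))
              exact mul_le_mul_of_nonneg_right h5 hCnn
          _ = Real.pi⁻¹ * (y / δ ^ 2) := one_mul _
      rw [hsplit]
      exact add_le_add hnear hfar
  -- now transfer to the complex integral
  apply key.congr'
  filter_upwards [self_mem_nhdsWithin] with y hy
  replace hy : (0:ℝ) < y := hy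
  have hzne : ∀ x : ℝ, ((x : ℂ) - ((x₀ : ℂ) + (y : ℂ) * Complex.I)) ≠ 0 := by
    intro x hx
    have him := congrArg Complex.im hx
    simp at him
    exact hy.ne' him
  have hcontz : Continuous fun x : ℝ => ((x : ℂ) - ((x₀ : ℂ) + (y : ℂ) * Complex.I))⁻¹ :=
    (Complex.continuous_ofReal.sub continuous_const).inv₀ hzne
  have hintz : Integrable (fun x : ℝ => ((x : ℂ) - ((x₀ : ℂ) + (y : ℂ) * Complex.I))⁻¹) μ := by
    refine ⟨hcontz.aestronglyMeasurable, ?_⟩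
    apply HasFiniteIntegral.of_bounded (C := y⁻¹)
    filter_upwards with x
    rw [norm_inv]
    have h1 : y ≤ ‖(x : ℂ) - ((x₀ : ℂ) + (y : ℂ) * Complex.I)‖ := by
      have h2 := Complex.abs_im_le_norm ((x : ℂ) - ((x₀ : ℂ) + (y : ℂ) * Complex.I))
      simp only [Complex.sub_im, Complex.ofReal_im, Complex.add_im, Complex.mul_im,
        Complex.ofReal_re, Complex.I_im, Complex.I_re, mul_zero, mul_one, zero_add,
        add_zero, zero_mul, zero_sub, abs_neg] at h2
      calc y = |y| := (abs_of_pos hy).symm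
        _ ≤ _ := h2
    exact inv_anti₀ hy h1
  have him : ∀ x : ℝ, (((x : ℂ) - ((x₀ : ℂ) + (y : ℂ) * Complex.I))⁻¹).im
      = Real.pi * P y x := by
    intro x
    have hden : (x - x₀) ^ 2 + y ^ 2 ≠ 0 := by positivity
    simp only [hPdef]
    rw [Complex.inv_im, mul_inv_cancel_left₀ hπ.ne']
    simp only [Complex.sub_im, Complex.ofReal_im, Complex.add_im, Complex.mul_im,
      Complex.ofReal_re, Complex.I_im, Complex.I_re, mul_zero, mul_one, zero_add, zero_sub,
      Complex.normSq_apply, Complex.sub_re, Complex.add_re, Complex.mul_re,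
      Complex.ofReal_im, neg_neg, sub_zero, add_zero, neg_mul_neg]
    rw [div_eq_div_iff (by nlinarith [sq_nonneg (x - x₀)]) (by positivity)]
    ring
  calc ∫ x, P y x ∂μ
      = ∫ x, (1 / Real.pi) * (Real.pi * P y x) ∂μ := by
        congr 1; funext x; field_simp
    _ = (1 / Real.pi) * ∫ x, Real.pi * P y x ∂μ := integral_const_mul _ _
    _ = (1 / Real.pi) * ∫ x, (((x : ℂ) - ((x₀ : ℂ) + (y : ℂ) * Complex.I))⁻¹).im ∂μ := by
        congr 1
        apply integral_congr_ae
        filter_upwards with x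
        exact (him x).symm
    _ = (1 / Real.pi) * (∫ x, ((x : ℂ) - ((x₀ : ℂ) + (y : ℂ) * Complex.I))⁻¹ ∂μ).im := by
        congr 1
        simp only [← RCLike.im_eq_complex_im]
        exact integral_im hintz
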